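/- Let a, b, c be integers with 0 ≤ a, b < c and d = (1−a−b) mod c. If d = 1 and the tetrahedron T_{a,b,c} is empty, then every point of ℤ³ lying in the interior of the parallelepiped P_{a,b,c} lies on the plane x + y − z = 1. -/

import Mathlib

/-- A point of `ℝ³` is a lattice point if all of its coordinates are integers. -/
def IsLatticePt (x : Fin 3 → ℝ) : Prop := ∀ i, ∃ m : ℤ, x i = (m : ℝ)

/-- The tetrahedron `T_{a,b,c}`: the convex hull of `(0,0,0)`, `(1,0,0)`, `(0,1,0)`, `(a,b,c)`. -/
def Tet (a b c : ℤ) : Set (Fin 3 → ℝ) :=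
  convexHull ℝ {![0,0,0], ![1,0,0], ![0,1,0], ![(a : ℝ), (b : ℝ), (c : ℝ)]}

/-- `T_{a,b,c}` is an empty lattice tetrahedron: it contains no point of `ℤ³`
other than its four vertices. -/
def TetIsEmpty (a b c : ℤ) : Prop :=
  ∀ x ∈ Tet a b c, IsLatticePt x →
    x = ![0,0,0] ∨ x = ![1,0,0] ∨ x = ![0,1,0] ∨ x = ![(a : ℝ), (b : ℝ), (c : ℝ)]

/-- The closed parallelepiped `P_{a,b,c}` spanned by `(1,0,0)`, `(0,1,0)`, `(a,b,c)`. -/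
def Par (a b c : ℤ) : Set (Fin 3 → ℝ) :=
  {x | ∃ s t u : ℝ, 0 ≤ s ∧ s ≤ 1 ∧ 0 ≤ t ∧ t ≤ 1 ∧ 0 ≤ u ∧ u ≤ 1 ∧
    x = s • ![1, 0, 0] + t • ![0, 1, 0] + u • ![(a : ℝ), (b : ℝ), (c : ℝ)]}

/-- The open parallelepiped spanned by `(1,0,0)`, `(0,1,0)`, `(a,b,c)`. -/
def OpenPar (a b c : ℤ) : Set (Fin 3 → ℝ) :=
  {x | ∃ s t u : ℝ, 0 < s ∧ s < 1 ∧ 0 < t ∧ t < 1 ∧ 0 < u ∧ u < 1 ∧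
    x = s • ![1, 0, 0] + t • ![0, 1, 0] + u • ![(a : ℝ), (b : ℝ), (c : ℝ)]}

lemma par_eval (a b c : ℤ) (s t u : ℝ) :
    s • ![(1:ℝ), 0, 0] + t • ![0, 1, 0] + u • ![(a : ℝ), (b : ℝ), (c : ℝ)]
      = ![s + u * a, t + u * b, u * c] := by
  funext i
  fin_cases i <;>
    simp [Matrix.cons_val_zero, Matrix.cons_val_one, Matrix.head_cons] <;> ring

lemma mem_Par_iff (a b c : ℤ) (hc : (c : ℝ) ≠ 0) (x : Fin 3 → ℝ) :
    x ∈ Par a b c ↔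
      0 ≤ x 0 - a * x 2 / c ∧ x 0 - a * x 2 / c ≤ 1 ∧
      0 ≤ x 1 - b * x 2 / c ∧ x 1 - b * x 2 / c ≤ 1 ∧
      0 ≤ x 2 / c ∧ x 2 / c ≤ 1 := by
  constructor
  · rintro ⟨s, t, u, hs0, hs1, ht0, ht1, hu0, hu1, rfl⟩
    rw [par_eval]
    have h0 : (![s + u * a, t + u * b, u * c] : Fin 3 → ℝ) 0 = s + u * a := rfl
    have h1 : (![s + u * a, t + u * b, u * c] : Fin 3 → ℝ) 1 = t + u * b := rfl
    have h2 : (![s + u * a, t + u * b, u * c] : Fin 3 → ℝ) 2 = u * c := rfl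
    rw [h0, h1, h2]
    have e1 : s + u * (a : ℝ) - a * (u * c) / c = s := by field_simp; ring
    have e2 : t + u * (b : ℝ) - b * (u * c) / c = t := by field_simp; ring
    have e3 : u * (c : ℝ) / c = u := by field_simp
    rw [e1, e2, e3]
    exact ⟨hs0, hs1, ht0, ht1, hu0, hu1⟩
  · rintro ⟨h1, h2, h3, h4, h5, h6⟩
    refine ⟨x 0 - a * x 2 / c, x 1 - b * x 2 / c, x 2 / c, h1, h2, h3, h4, h5, h6, ?_⟩
    rw [par_eval]
    funext i
    fin_cases i <;>
      simp [Matrix.cons_val_zero, Matrix.cons_val_one, Matrix.head_cons] <;>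
      field_simp <;> ring

lemma ball_perturb {a b c : ℤ} {x : Fin 3 → ℝ} {ε : ℝ} (hε : 0 < ε)
    (hball : Metric.ball x ε ⊆ Par a b c) (w : Fin 3 → ℝ) :
    ∃ δ : ℝ, 0 < δ ∧ x - δ • w ∈ Par a b c ∧ x + δ • w ∈ Par a b c := by
  have hw := norm_nonneg w
  refine ⟨ε / (2 * (‖w‖ + 1)), by positivity, ?_, ?_⟩
  · apply hball
    rw [Metric.mem_ball, dist_eq_norm]
    have h : x - (ε / (2 * (‖w‖ + 1))) • w - x = (-(ε / (2 * (‖w‖ + 1)))) • w := by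
      module
    rw [h, norm_smul, Real.norm_eq_abs, abs_neg, abs_of_pos (by positivity)]
    rw [div_mul_eq_mul_div, div_lt_iff₀ (by positivity)]
    nlinarith
  · apply hball
    rw [Metric.mem_ball, dist_eq_norm]
    have h : x + (ε / (2 * (‖w‖ + 1))) • w - x = (ε / (2 * (‖w‖ + 1))) • w := by
      module
    rw [h, norm_smul, Real.norm_eq_abs, abs_of_pos (by positivity)]
    rw [div_mul_eq_mul_div, div_lt_iff₀ (by positivity)]
    nlinarith

lemma interior_strict (a b c : ℤ) (hc : (c : ℝ) ≠ 0) (x : Fin 3 → ℝ)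
    (hx : x ∈ interior (Par a b c)) :
    0 < x 0 - a * x 2 / c ∧ x 0 - a * x 2 / c < 1 ∧
    0 < x 1 - b * x 2 / c ∧ x 1 - b * x 2 / c < 1 ∧
    0 < x 2 / c ∧ x 2 / c < 1 := by
  rw [mem_interior_iff_mem_nhds, Metric.mem_nhds_iff] at hx
  obtain ⟨ε, hε, hball⟩ := hx
  obtain ⟨δ₁, hδ₁, hm1, hp1⟩ := ball_perturb hε hball ![1, 0, 0]
  obtain ⟨δ₂, hδ₂, hm2, hp2⟩ := ball_perturb hε hball ![0, 1, 0]
  obtain ⟨δ₃, hδ₃, hm3, hp3⟩ := ball_perturb hε hball ![(a : ℝ), (b : ℝ), (c : ℝ)]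
  rw [mem_Par_iff a b c hc] at hm1 hp1 hm2 hp2 hm3 hp3
  simp only [Pi.sub_apply, Pi.add_apply, Pi.smul_apply, Matrix.cons_val_zero,
    Matrix.cons_val_one, Matrix.head_cons, Matrix.cons_val_two, Matrix.tail_cons,
    smul_eq_mul, mul_one, mul_zero, sub_zero, add_zero] at hm1 hp1 hm2 hp2 hm3 hp3
  have e3m : (x 2 - δ₃ * (c : ℝ)) / c = x 2 / c - δ₃ := by field_simp
  have e3p : (x 2 + δ₃ * (c : ℝ)) / c = x 2 / c + δ₃ := by field_simp; try ring
  refine ⟨?_, ?_, ?_, ?_, ?_, ?_⟩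
  · have := hm1.1; linarith
  · have := hp1.2.1; linarith
  · have := hm2.2.2.1; linarith
  · have := hp2.2.2.2.1; linarith
  · have h := hm3.2.2.2.2.1; rw [e3m] at h; linarith
  · have h := hp3.2.2.2.2.2; rw [e3p] at h; linarith

/-- If `0 ≤ a, b < c`, `d = (1 - a - b) mod c`, `d = 1` and the tetrahedron `T_{a,b,c}` is
empty, then every point of `ℤ³` lying in the interior of the parallelepiped `P_{a,b,c}`
lies on the plane `x + y - z = 1`. -/
theorem stmt_6 (a b c d : ℤ) (ha : 0 ≤ a) (hac : a < c) (hb : 0 ≤ b) (hbc : b < c)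
    (hd : d = (1 - a - b) % c) (hd1 : d = 1)
    (hempty : TetIsEmpty a b c) :
    ∀ x ∈ interior (Par a b c), IsLatticePt x → x 0 + x 1 - x 2 = 1 := by
  intro x hx hlat
  have hc0 : 0 < c := lt_of_le_of_lt ha hac
  have hc : (c : ℝ) ≠ 0 := by exact_mod_cast (by omega : c ≠ 0)
  obtain ⟨hs0, hs1, ht0, ht1, hu0, hu1⟩ := interior_strict a b c hc x hx
  obtain ⟨m0, h0⟩ := hlat 0
  obtain ⟨m1, h1⟩ := hlat 1
  obtain ⟨m2, h2⟩ := hlat 2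
  have hmod1 : (1 - a - b) % c = 1 := hd.symm.trans hd1
  have h4 := Int.emod_add_mul_ediv (1 - a - b) c
  have hdvd : c ∣ (a + b) := by
    refine ⟨-((1 - a - b) / c), ?_⟩
    have h5 : a + b = -(c * ((1 - a - b) / c)) := by linarith
    rw [h5]; ring
  obtain ⟨k, hk⟩ := hdvd
  have hk0 : 0 ≤ k := by nlinarith
  have hk2 : k < 2 := by nlinarith
  have hab : a + b = 0 ∨ a + b = c := by
    rcases (by omega : k = 0 ∨ k = 1) with rfl | rfl
    · left; rw [hk, mul_zero]
    · right; rw [hk, mul_one]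
  rcases hab with h | h
  · exfalso
    have ha0 : a = 0 := by omega
    rw [ha0] at hs0 hs1
    push_cast at hs0 hs1
    norm_num at hs0 hs1
    have hx0 : (0 : ℝ) < (m0 : ℝ) := by rw [← h0]; linarith
    have hx1 : (m0 : ℝ) < 1 := by rw [← h0]; linarith
    have g0 : (0 : ℤ) < m0 := by exact_mod_cast hx0
    have g1 : m0 < 1 := by exact_mod_cast hx1
    omega
  · have habR : (a : ℝ) + b = c := by exact_mod_cast h
    have hsum : x 0 - a * x 2 / c + (x 1 - b * x 2 / c) = x 0 + x 1 - x 2 := by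
      have key : (a : ℝ) * x 2 / c + (b : ℝ) * x 2 / c = x 2 := by
        field_simp
        linear_combination x 2 * habR
      linarith
    have hk : x 0 + x 1 - x 2 = ((m0 + m1 - m2 : ℤ) : ℝ) := by
      rw [h0, h1, h2]; push_cast; ring
    have b1 : (0 : ℝ) < ((m0 + m1 - m2 : ℤ) : ℝ) := by rw [← hk, ← hsum]; linarith
    have b2 : ((m0 + m1 - m2 : ℤ) : ℝ) < 2 := by rw [← hk, ← hsum]; linarith
    have g1 : (0 : ℤ) < m0 + m1 - m2 := by exact_mod_cast b1
    have g2 : m0 + m1 - m2 < 2 := by exact_mod_cast b2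
    have : m0 + m1 - m2 = 1 := by omega
    rw [hk, this]
    norm_num
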